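/- If the curvatures of a surface satisfy K' = α·H + β·H' + γ, then the curvatures of its parallel surface at distance a, related by K' = K̄'·Δ⁻¹, H = (εH̄ + aK̄')·Δ⁻¹, H' = εH̄'·Δ⁻¹ with Δ = 1 + 2aεH̄ + a²K̄' ≠ 0 and ε² = 1, satisfy ε(α + 2aγ)·H̄ + εβ·H̄' + γ = (1 − aα − a²γ)·K̄'. -/

import Mathlib

/-- If K' = α·H + β·H' + γ then the invariants of the parallel surface satisfy
ε(α + 2aγ)·Hb + εβ·Hb' + γ = (1 − aα − a²γ)·Kb'. -/
theorem stmt6 (a α β γ Hb Hb' Kb' ε : ℝ)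
    (hε : ε = 1 ∨ ε = -1)
    (Δ : ℝ) (hΔdef : Δ = 1 + 2 * a * ε * Hb + a ^ 2 * Kb') (hΔ : Δ ≠ 0)
    (K' H H' : ℝ)
    (hK : K' = Kb' / Δ)
    (hH : H = (ε * Hb + a * Kb') / Δ) (hH' : H' = ε * Hb' / Δ)
    (hrel : K' = α * H + β * H' + γ) :
    ε * (α + 2 * a * γ) * Hb + ε * β * Hb' + γ = (1 - a * α - a ^ 2 * γ) * Kb' := by
  subst hK hH hH' hΔdef
  have hrel' := hrel
  have hΔ2 : 1 + 2 * a * ε * Hb + Kb' * a ^ 2 ≠ 0 := by rwa [mul_comm Kb']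
  field_simp at hrel'
  rcases hε with h | h <;> subst h <;> nlinarith [hrel', sq_nonneg a]
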